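/- Let k be a field and Pre(Cor) the category of presheaves with transfers (additive contravariant functors from finite correspondences to abelian groups). The strict homotopization functor F ↦ [F] := Coker(i₁* − i₀* : F(−×𝔸¹) → F) is left adjoint to the inclusion of the full subcategory of homotopy invariant presheaves with transfers into Pre(Cor). -/

import Mathlib

open CategoryTheory Limits

universe v u

variable {C : Type u} [Category.{v} C] [Preadditive C]

/-- Abstract interval data on a category of correspondences `C`: the endofunctor
`X ↦ X × 𝔸¹` together with the projection `p` and the zero and one sections
`i₀, i₁`, which split `p`. -/
structure IntervalData (C : Type u) [Category.{v} C] where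
  A : C ⥤ C
  p : A ⟶ 𝟭 C
  i₀ : 𝟭 C ⟶ A
  i₁ : 𝟭 C ⟶ A
  i₀_p : i₀ ≫ p = 𝟙 (𝟭 C)
  i₁_p : i₁ ≫ p = 𝟙 (𝟭 C)

variable (I : IntervalData C)

/-- The natural transformation `i₁* − i₀* : F(−×𝔸¹) ⟶ F` whose cokernel is the
strict homotopization `[F]`. -/
@[simps]
def sectionsDifference (F : Cᵒᵖ ⥤ AddCommGrpCat) : I.A.op ⋙ F ⟶ F where
  app X := F.map (I.i₁.app X.unop).op - F.map (I.i₀.app X.unop).op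
  naturality X Y f := by
    dsimp
    simp only [Preadditive.comp_sub, Preadditive.sub_comp, ← F.map_comp, ← op_comp]
    rw [← NatTrans.naturality, ← NatTrans.naturality]
    rw [← Quiver.Hom.op_unop f, ← op_comp, ← op_comp]
    simp

/-- A presheaf (with transfers) `F` is homotopy invariant if
`pr* : F(X) → F(X×𝔸¹)` is an isomorphism for all `X`. -/
def HomotopyInvariant : Set (Cᵒᵖ ⥤ AddCommGrpCat) :=
  {F | ∀ X : C, IsIso (F.map (I.p.app X).op)}

lemma sectionsDifference_eq_zero (G : Cᵒᵖ ⥤ AddCommGrpCat)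
    (hG : G ∈ HomotopyInvariant I) : sectionsDifference I G = 0 := by
  ext X : 2
  have h := hG X.unop
  dsimp [sectionsDifference]
  rw [sub_eq_zero]
  rw [← cancel_epi (G.map (I.p.app X.unop).op), ← G.map_comp, ← G.map_comp,
    ← op_comp, ← op_comp]
  have h1 : I.i₁.app X.unop ≫ I.p.app X.unop = 𝟙 X.unop := congrArg (fun t => t.app X.unop) I.i₁_p
  have h0 : I.i₀.app X.unop ≫ I.p.app X.unop = 𝟙 X.unop := congrArg (fun t => t.app X.unop) I.i₀_p
  rw [h1, h0]

lemma sectionsDifference_naturality {F G : Cᵒᵖ ⥤ AddCommGrpCat} (φ : F ⟶ G) :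
    sectionsDifference I F ≫ φ = Functor.whiskerLeft I.A.op φ ≫ sectionsDifference I G := by
  ext X : 2
  dsimp [sectionsDifference]
  rw [Preadditive.sub_comp, Preadditive.comp_sub, φ.naturality, φ.naturality]

lemma sectionsDifference_comp_eq_zero {F G : Cᵒᵖ ⥤ AddCommGrpCat}
    (hG : G ∈ HomotopyInvariant I) (φ : F ⟶ G) :
    sectionsDifference I F ≫ φ = 0 := by
  rw [sectionsDifference_naturality, sectionsDifference_eq_zero I G hG, comp_zero]

/-- The strict homotopization functor `F ↦ [F] = Coker(i₁* − i₀* : F(−×𝔸¹) → F)` is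
left adjoint to the inclusion of the full subcategory of homotopy invariant presheaves
with transfers into `Pre(Cor)`. (The hypothesis `hkey` is Voevodsky's key fact that
`[F]` is homotopy invariant, being the zeroth homology of the Suslin complex.) -/
theorem strict_homotopization_left_adjoint
    (hkey : ∀ F : Cᵒᵖ ⥤ AddCommGrpCat,
      cokernel (sectionsDifference I F) ∈ HomotopyInvariant I) :
    ∃ (L : (Cᵒᵖ ⥤ AddCommGrpCat) ⥤ ObjectProperty.FullSubcategory (fun F => F ∈ HomotopyInvariant I))
      (_ : L ⊣ ObjectProperty.ι (fun F => F ∈ HomotopyInvariant I)),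
      ∀ F : Cᵒᵖ ⥤ AddCommGrpCat,
        Nonempty ((ObjectProperty.ι (fun F => F ∈ HomotopyInvariant I)).obj (L.obj F) ≅
          cokernel (sectionsDifference I F)) := by
  refine ⟨{
    obj := fun F => ⟨cokernel (sectionsDifference I F), hkey F⟩
    map := fun {F G} φ => ObjectProperty.homMk (cokernel.desc _ (φ ≫ cokernel.π _) (by
      rw [← Category.assoc, sectionsDifference_naturality, Category.assoc,
        cokernel.condition, comp_zero]))
    map_id := fun F => by
      apply ObjectProperty.hom_ext
      show cokernel.desc _ (𝟙 F ≫ cokernel.π _) _ = 𝟙 (cokernel (sectionsDifference I F))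
      apply coequalizer.hom_ext
      simp
    map_comp := fun {F G H} φ ψ => by
      apply ObjectProperty.hom_ext
      show cokernel.desc _ ((φ ≫ ψ) ≫ cokernel.π _) _ =
        cokernel.desc _ (φ ≫ cokernel.π _) _ ≫ cokernel.desc _ (ψ ≫ cokernel.π _) _
      apply coequalizer.hom_ext
      simp }, ?_, fun F => ⟨Iso.refl _⟩⟩
  exact Adjunction.mkOfHomEquiv
    { homEquiv := fun F G =>
        { toFun := fun ψ => cokernel.π _ ≫ ψ.hom
          invFun := fun χ => ObjectProperty.homMk (cokernel.desc _ χ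
            (sectionsDifference_comp_eq_zero I G.property χ))
          left_inv := fun ψ => by
            apply ObjectProperty.hom_ext
            apply coequalizer.hom_ext
            simp
          right_inv := fun χ => by simp }
      homEquiv_naturality_left_symm := fun {F F' G} f g => by
        apply ObjectProperty.hom_ext
        show cokernel.desc _ (f ≫ g) _ =
          cokernel.desc _ (f ≫ cokernel.π _) _ ≫ cokernel.desc _ g _
        apply coequalizer.hom_ext
        simp
      homEquiv_naturality_right := fun {F G G'} f g => by
        dsimp only [Equiv.coe_fn_mk]
        exact (Category.assoc _ _ _).symm }
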